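/- Suppose there exist edge decompositions into a fixed graph G of: K_{4i+e}, K_{xp+yq+e}, the complete multipartite graphs K_{i,i,i,i}, K_{i,i,i,i,p}, and K_{i,i,i,i,q}, where i,t,p,q are positive integers, x,y ≥ 0 with x+y = w ≤ 4t, and e ∈ {0,1}. If moreover there exists a resolvable 4-GDD structure underlying Wilson's construction for these parameters (i.e., the construction of Forbes–Griggs–Forbes applies), then there exists a G-design of order 12it + 4i + xp + yq + e. -/

import Mathlib

open SimpleGraph

/-- `H` decomposes into edge-disjoint copies of `G`. -/
def HasDecomp {V W : Type*} (H : SimpleGraph V) (G : SimpleGraph W) : Prop :=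
  ∃ parts : Set H.Subgraph,
    (∀ p ∈ parts, Nonempty (p.coe ≃g G)) ∧
    ∀ e ∈ H.edgeSet, ∃! p, p ∈ parts ∧ e ∈ SimpleGraph.Subgraph.edgeSet p

section Base
variable {W : Type*} {G : SimpleGraph W}

/-- the canonical hom from `H` to `H.map f` -/
def mapHom {V V' : Type*} (f : V ↪ V') (H : SimpleGraph V) : H →g H.map f :=
  ⟨f, fun h => ⟨fun hq => H.ne_of_adj h (f.injective hq), _, _, h, rfl, rfl⟩⟩

lemma mem_edgeSet_map {V V' : Type*} (f : V ↪ V') (H : SimpleGraph V) (e : Sym2 V') :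
    e ∈ (H.map f).edgeSet ↔ ∃ e₀ ∈ H.edgeSet, Sym2.map f e₀ = e := by
  induction e using Sym2.inductionOn with
  | hf a b =>
    simp only [mem_edgeSet, map_adj]
    constructor
    · rintro ⟨u, v, h, rfl, rfl⟩
      exact ⟨s(u, v), h, rfl⟩
    · rintro ⟨e₀, he₀, hm⟩
      induction e₀ using Sym2.inductionOn with
      | hf u v =>
        rw [Sym2.map_pair_eq, Sym2.eq_iff] at hm
        rcases hm with ⟨rfl, rfl⟩ | ⟨rfl, rfl⟩
        · exact ⟨u, v, he₀, rfl, rfl⟩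
        · exact ⟨v, u, he₀.symm, rfl, rfl⟩

lemma mem_edgeSet_subgraph_map {V V' : Type*} (f : V ↪ V') {H : SimpleGraph V}
    (p : H.Subgraph) (e : Sym2 V') :
    e ∈ (p.map (mapHom f H)).edgeSet ↔ ∃ e₀ ∈ p.edgeSet, Sym2.map f e₀ = e := by
  induction e using Sym2.inductionOn with
  | hf a b =>
    simp only [Subgraph.mem_edgeSet, Subgraph.map_adj, Relation.Map]
    constructor
    · rintro ⟨u, v, h, rfl, rfl⟩
      exact ⟨s(u, v), h, rfl⟩
    · rintro ⟨e₀, he₀, hm⟩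
      induction e₀ using Sym2.inductionOn with
      | hf u v =>
        rw [Sym2.map_pair_eq, Sym2.eq_iff] at hm
        rcases hm with ⟨rfl, rfl⟩ | ⟨rfl, rfl⟩
        · exact ⟨u, v, he₀, rfl, rfl⟩
        · exact ⟨v, u, he₀.symm, rfl, rfl⟩

/-- the coe of the original is isomorphic to the coe of a mapped subgraph -/
noncomputable def coeMapIso {V V' : Type*} (f : V ↪ V') {H : SimpleGraph V}
    (p : H.Subgraph) : p.coe ≃g (p.map (mapHom f H)).coe := by
  refine ⟨Equiv.Set.image f p.verts f.injective, ?_⟩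
  rintro ⟨a, ha⟩ ⟨b, hb⟩
  simp only [Subgraph.coe_adj, Subgraph.map_adj, Relation.Map, Equiv.Set.image_apply]
  constructor
  · rintro ⟨u, v, h, hu, hv⟩
    rw [f.injective hu, f.injective hv] at h
    exact h
  · intro h
    exact ⟨a, b, h, rfl, rfl⟩

/-- transfer a decomposition along an embedding of host graphs -/
lemma hasDecomp_map {V V' : Type*} (f : V ↪ V') {H : SimpleGraph V}
    (hd : HasDecomp H G) : HasDecomp (H.map f) G := by
  obtain ⟨parts, hiso, hcov⟩ := hd
  refine ⟨(fun p => p.map (mapHom f H)) '' parts, ?_, ?_⟩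
  · rintro P ⟨p, hp, rfl⟩
    obtain ⟨ψ⟩ := hiso p hp
    exact ⟨ψ.comp (coeMapIso f p).symm⟩
  · intro e he
    rw [mem_edgeSet_map] at he
    obtain ⟨e₀, he₀, rfl⟩ := he
    obtain ⟨p, ⟨hp, hpe⟩, hup⟩ := hcov e₀ he₀
    refine ⟨p.map (mapHom f H), ⟨⟨p, hp, rfl⟩, ?_⟩, ?_⟩
    · rw [mem_edgeSet_subgraph_map]; exact ⟨e₀, hpe, rfl⟩
    · rintro P ⟨⟨p', hp', rfl⟩, hPe⟩
      rw [mem_edgeSet_subgraph_map] at hPe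
      obtain ⟨e₁, he₁, hm⟩ := hPe
      have : e₁ = e₀ := Sym2.map.injective f.injective hm
      subst this
      rw [hup p' ⟨hp', he₁⟩]

lemma hasDecomp_congr {V : Type*} {H H' : SimpleGraph V} (h : H = H')
    (hd : HasDecomp H' G) : HasDecomp H G := h ▸ hd

/-- transfer a decomposition along a host isomorphism -/
lemma hasDecomp_of_iso {V V' : Type*} {H : SimpleGraph V} {H' : SimpleGraph V'}
    (φ : H ≃g H') (hd : HasDecomp H' G) : HasDecomp H G := by
  have hmap : H = H'.map (φ.symm.toEquiv.toEmbedding) := by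
    ext a b
    simp only [map_adj, Equiv.toEmbedding_apply]
    constructor
    · intro h
      exact ⟨φ a, φ b, φ.map_adj_iff.mpr (by simpa using h), by simp, by simp⟩
    · rintro ⟨u, v, h, rfl, rfl⟩
      exact φ.symm.map_adj_iff.mpr h
  exact hasDecomp_congr hmap (hasDecomp_map _ hd)

end Base

section Glue
variable {W : Type*} {G : SimpleGraph W}

/-- reinterpret a subgraph of a smaller graph as a subgraph of a bigger one -/
def Subgraph.includeLE {V : Type*} {H H' : SimpleGraph V} (h : H ≤ H') (p : H.Subgraph) :
    H'.Subgraph :=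
  ⟨p.verts, p.Adj, fun {a b} hab => h (p.adj_sub hab), fun {a b} hab => p.edge_vert hab, p.symm⟩

def Subgraph.includeLECoeIso {V : Type*} {H H' : SimpleGraph V} (h : H ≤ H') (p : H.Subgraph) :
    (Subgraph.includeLE h p).coe ≃g p.coe :=
  ⟨Equiv.refl _, Iff.rfl⟩

lemma Subgraph.mem_edgeSet_includeLE {V : Type*} {H H' : SimpleGraph V} (h : H ≤ H')
    (p : H.Subgraph) (e : Sym2 V) :
    e ∈ (Subgraph.includeLE h p).edgeSet ↔ e ∈ p.edgeSet := by
  induction e using Sym2.inductionOn with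
  | hf a b => rfl

/-- glue decompositions of edge-disjoint pieces covering `H` -/
lemma hasDecomp_glue {V : Type*} {H : SimpleGraph V} {ι : Type*} (F : ι → SimpleGraph V)
    (hle : ∀ k, F k ≤ H)
    (hd : ∀ k, HasDecomp (F k) G)
    (hcov : ∀ e ∈ H.edgeSet, ∃! k, e ∈ (F k).edgeSet) : HasDecomp H G := by
  classical
  choose parts hiso hpcov using hd
  refine ⟨⋃ k, (Subgraph.includeLE (hle k)) '' (parts k), ?_, ?_⟩
  · rintro P hP
    simp only [Set.mem_iUnion, Set.mem_image] at hP
    obtain ⟨k, p, hp, rfl⟩ := hP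
    obtain ⟨ψ⟩ := hiso k p hp
    exact ⟨ψ.comp (Subgraph.includeLECoeIso (hle k) p)⟩
  · intro e he
    obtain ⟨k, hk, huk⟩ := hcov e he
    obtain ⟨p, ⟨hp, hpe⟩, hup⟩ := hpcov k e hk
    refine ⟨Subgraph.includeLE (hle k) p, ⟨?_, ?_⟩, ?_⟩
    · exact Set.mem_iUnion.mpr ⟨k, ⟨p, hp, rfl⟩⟩
    · rw [Subgraph.mem_edgeSet_includeLE]; exact hpe
    · rintro P ⟨hPmem, hPe⟩
      simp only [Set.mem_iUnion, Set.mem_image] at hPmem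
      obtain ⟨k', p', hp', rfl⟩ := hPmem
      rw [Subgraph.mem_edgeSet_includeLE] at hPe
      have hek' : e ∈ (F k').edgeSet := by
        induction e using Sym2.inductionOn with
        | hf a b => exact p'.adj_sub hPe
      have : k' = k := huk k' hek'
      subst this
      rw [hup p' ⟨hp', hPe⟩]

end Glue

/-- A resolvable 4-GDD of type `4^(3t+1)`: the underlying structure of Wilson's
construction as used by Forbes–Griggs–Forbes.  The `12t + 4` points are partitioned
into `3t + 1` groups of size 4; the blocks have size 4, are organised into `4t`
parallel classes (each class partitioning the point set), every pair of points from
distinct groups lies in exactly one block, and no block meets a group twice. -/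
structure Resolvable4GDD (t : ℕ) where
  groups : Finset (Finset (Fin (12 * t + 4)))
  classes : Fin (4 * t) → Finset (Finset (Fin (12 * t + 4)))
  groups_card : groups.card = 3 * t + 1
  group_size : ∀ g ∈ groups, g.card = 4
  groups_partition : ∀ v, ∃! g, g ∈ groups ∧ v ∈ g
  block_size : ∀ c, ∀ b ∈ classes c, b.card = 4
  class_partition : ∀ c, ∀ v, ∃! b, b ∈ classes c ∧ v ∈ b
  cross_once : ∀ u v : Fin (12 * t + 4), u ≠ v →
    (∀ g ∈ groups, ¬(u ∈ g ∧ v ∈ g)) →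
    ∃! cb : Fin (4 * t) × Finset (Fin (12 * t + 4)),
      cb.2 ∈ classes cb.1 ∧ u ∈ cb.2 ∧ v ∈ cb.2
  within_never : ∀ u v : Fin (12 * t + 4), u ≠ v →
    (∃ g ∈ groups, u ∈ g ∧ v ∈ g) →
    ∀ c, ∀ b ∈ classes c, ¬(u ∈ b ∧ v ∈ b)

namespace FGF

/-! ### source graphs on structured vertex types -/

def part5 {i p : ℕ} : (Fin 4 × Fin i) ⊕ Fin p → Fin 5 :=
  Sum.elim (fun z => z.1.castSucc) (fun _ => 4)

def toM5 {i p : ℕ} : (Fin 4 × Fin i) ⊕ Fin p → Σ j : Fin 5, ![Fin i, Fin i, Fin i, Fin i, Fin p] j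
  | .inl (⟨0, _⟩, v) => ⟨0, v⟩
  | .inl (⟨1, _⟩, v) => ⟨1, v⟩
  | .inl (⟨2, _⟩, v) => ⟨2, v⟩
  | .inl (⟨3, _⟩, v) => ⟨3, v⟩
  | .inr v => ⟨4, v⟩

def fromM5 {i p : ℕ} : (Σ j : Fin 5, ![Fin i, Fin i, Fin i, Fin i, Fin p] j) → (Fin 4 × Fin i) ⊕ Fin p
  | ⟨⟨0, _⟩, v⟩ => .inl (⟨0, by omega⟩, v)
  | ⟨⟨1, _⟩, v⟩ => .inl (⟨1, by omega⟩, v)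
  | ⟨⟨2, _⟩, v⟩ => .inl (⟨2, by omega⟩, v)
  | ⟨⟨3, _⟩, v⟩ => .inl (⟨3, by omega⟩, v)
  | ⟨⟨4, _⟩, v⟩ => .inr v

def equivM5 {i p : ℕ} :
    ((Fin 4 × Fin i) ⊕ Fin p) ≃ Σ j : Fin 5, ![Fin i, Fin i, Fin i, Fin i, Fin p] j where
  toFun := toM5
  invFun := fromM5
  left_inv := by
    rintro (⟨⟨j, hj⟩, v⟩ | v)
    · interval_cases j <;> rfl
    · rfl
  right_inv := by
    rintro ⟨⟨j, hj⟩, v⟩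
    interval_cases j <;> rfl

lemma fst_equivM5 {i p : ℕ} (a : (Fin 4 × Fin i) ⊕ Fin p) : (equivM5 a).1 = part5 a := by
  rcases a with ⟨⟨j, hj⟩, v⟩ | v
  · interval_cases j <;> rfl
  · rfl

/-- `K_{i,i,i,i,p}` on a structured vertex type -/
def K5 (i p : ℕ) : SimpleGraph ((Fin 4 × Fin i) ⊕ Fin p) :=
  SimpleGraph.comap part5 (⊤ : SimpleGraph (Fin 5))

def isoM5 {i p : ℕ} : (K5 i p) ≃g completeMultipartiteGraph ![Fin i, Fin i, Fin i, Fin i, Fin p] where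
  toEquiv := equivM5
  map_rel_iff' := by
    intro a b
    simp only [completeMultipartiteGraph, K5, comap_adj, top_adj, Equiv.coe_fn_mk]
    rw [fst_equivM5, fst_equivM5]

/-- `K_{i,i,i,i}` on a structured vertex type -/
def K4p (i : ℕ) : SimpleGraph (Fin 4 × Fin i) :=
  SimpleGraph.comap Prod.fst (⊤ : SimpleGraph (Fin 4))

def isoK4p {i : ℕ} : (K4p i) ≃g completeMultipartiteGraph (fun _ : Fin 4 => Fin i) where
  toEquiv := (Equiv.sigmaEquivProd (Fin 4) (Fin i)).symm
  map_rel_iff' := by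
    intro a b
    simp only [completeMultipartiteGraph, K4p, comap_adj, top_adj]
    rfl

end FGF

namespace FGF

section Pieces

variable (t i x p y q e : ℕ)

/-- the big vertex set -/
abbrev VV := (Fin (12 * t + 4) × Fin i) ⊕ ((Fin x × Fin p ⊕ Fin y × Fin q) ⊕ Fin e)

variable {t}

/-- embedding used for a group piece -/
def grpEmb (g : Finset (Fin (12 * t + 4))) (hg : g.card = 4) :
    ((Fin 4 × Fin i) ⊕ Fin e) ↪ VV t i x p y q e :=
  Function.Embedding.sumMap
    (Function.Embedding.prodMap (g.orderEmbOfFin hg).toEmbedding (Function.Embedding.refl _))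
    (Function.Embedding.inr)

/-- a group piece: a copy of `K_{4i+e}` -/
def pieceGroup (g : Finset (Fin (12 * t + 4))) (hg : g.card = 4) : SimpleGraph (VV t i x p y q e) :=
  SimpleGraph.map (grpEmb i x p y q e g hg) ⊤

/-- the extra piece: a copy of `K_{xp+yq+e}` -/
def pieceExtra : SimpleGraph (VV t i x p y q e) :=
  SimpleGraph.map (Function.Embedding.inr) ⊤

/-- embedding of a block into the main part -/
def blkEmb (b : Finset (Fin (12 * t + 4))) (hb : b.card = 4) :
    (Fin 4 × Fin i) ↪ Fin (12 * t + 4) × Fin i :=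
  Function.Embedding.prodMap (b.orderEmbOfFin hb).toEmbedding (Function.Embedding.refl _)

def xEmb (j : Fin x) : Fin p ↪ (Fin x × Fin p ⊕ Fin y × Fin q) ⊕ Fin e :=
  ⟨fun v => .inl (.inl (j, v)), by intro a b h; simpa using h⟩

def yEmb (j : Fin y) : Fin q ↪ (Fin x × Fin p ⊕ Fin y × Fin q) ⊕ Fin e :=
  ⟨fun v => .inl (.inr (j, v)), by intro a b h; simpa using h⟩

variable {x y}

/-- a block piece -/
def pieceBlock (c : Fin (4 * t)) (b : Finset (Fin (12 * t + 4))) (hb : b.card = 4) :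
    SimpleGraph (VV t i x p y q e) :=
  if hcx : (c : ℕ) < x then
    SimpleGraph.map
      (Function.Embedding.sumMap (blkEmb i b hb) (xEmb x p y q e ⟨(c : ℕ), hcx⟩)) (K5 i p)
  else if hcy : (c : ℕ) < x + y then
    SimpleGraph.map
      (Function.Embedding.sumMap (blkEmb i b hb) (yEmb x p y q e ⟨(c : ℕ) - x, by omega⟩)) (K5 i q)
  else
    SimpleGraph.map ((blkEmb i b hb).trans (Function.Embedding.inl)) (K4p i)

end Pieces

/-! ### adjacency characterizations -/

lemma map_top_adj' {α β : Type*} (f : α ↪ β) (a b : β) :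
    ((⊤ : SimpleGraph α).map f).Adj a b ↔ a ≠ b ∧ a ∈ Set.range f ∧ b ∈ Set.range f := by
  simp only [map_adj, top_adj]
  constructor
  · rintro ⟨u, v, huv, rfl, rfl⟩
    exact ⟨fun h => huv (f.injective h), ⟨u, rfl⟩, ⟨v, rfl⟩⟩
  · rintro ⟨hab, ⟨u, rfl⟩, ⟨v, rfl⟩⟩
    exact ⟨u, v, fun h => hab (by rw [h]), rfl, rfl⟩

section AdjChar

variable {t i x p y q e : ℕ}

lemma mem_range_grpEmb {g : Finset (Fin (12 * t + 4))} {hg : g.card = 4}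
    {a : VV t i x p y q e} :
    a ∈ Set.range (grpEmb i x p y q e g hg) ↔
      (∃ u ∈ g, ∃ ci : Fin i, a = .inl (u, ci)) ∨ (∃ z : Fin e, a = .inr (.inr z)) := by
  constructor
  · rintro ⟨(⟨k, ci⟩ | z), rfl⟩
    · exact .inl ⟨g.orderEmbOfFin hg k, g.orderEmbOfFin_mem hg k, ci, rfl⟩
    · exact .inr ⟨z, rfl⟩
  · rintro (⟨u, hu, ci, rfl⟩ | ⟨z, rfl⟩)
    · have : u ∈ Set.range (g.orderEmbOfFin hg) := by
        rw [Finset.range_orderEmbOfFin]; exact hu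
      obtain ⟨k, rfl⟩ := this
      exact ⟨.inl (k, ci), rfl⟩
    · exact ⟨.inr z, rfl⟩

lemma pieceGroup_adj {g : Finset (Fin (12 * t + 4))} {hg : g.card = 4}
    {a b : VV t i x p y q e} :
    (pieceGroup i x p y q e g hg).Adj a b ↔ a ≠ b ∧
      ((∃ u ∈ g, ∃ ci : Fin i, a = .inl (u, ci)) ∨ (∃ z : Fin e, a = .inr (.inr z))) ∧
      ((∃ u ∈ g, ∃ ci : Fin i, b = .inl (u, ci)) ∨ (∃ z : Fin e, b = .inr (.inr z))) := by
  rw [pieceGroup, map_top_adj', mem_range_grpEmb, mem_range_grpEmb]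

lemma pieceExtra_adj {a b : VV t i x p y q e} :
    (pieceExtra i x p y q e).Adj a b ↔ a ≠ b ∧
      (∃ z, a = .inr z) ∧ (∃ z, b = .inr z) := by
  rw [pieceExtra, map_top_adj']
  simp [Set.range, eq_comm]

/-- the extra (inflated) vertices attached to class `c` -/
def ExtraOf (c : Fin (4 * t)) (z : VV t i x p y q e) : Prop :=
  (∃ (h : (c : ℕ) < x), ∃ α : Fin p, z = .inr (.inl (.inl (⟨(c : ℕ), h⟩, α)))) ∨
  (∃ (_ : x ≤ (c : ℕ)) (h2 : (c : ℕ) - x < y), ∃ β : Fin q,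
      z = .inr (.inl (.inr (⟨(c : ℕ) - x, h2⟩, β))))

lemma exists_orderEmb {b : Finset (Fin (12 * t + 4))} (hb : b.card = 4) {u : Fin (12 * t + 4)}
    (hu : u ∈ b) : ∃ k, b.orderEmbOfFin hb k = u := by
  have : u ∈ Set.range (b.orderEmbOfFin hb) := by rw [Finset.range_orderEmbOfFin]; exact hu
  exact this

lemma pieceBlock_adj {c : Fin (4 * t)} {b : Finset (Fin (12 * t + 4))} {hb : b.card = 4}
    {a a' : VV t i x p y q e} :
    (pieceBlock i p q e c b hb).Adj a a' ↔
      (∃ u ∈ b, ∃ v ∈ b, u ≠ v ∧ ∃ c1 c2 : Fin i, a = .inl (u, c1) ∧ a' = .inl (v, c2)) ∨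
      (∃ u ∈ b, ∃ c1 : Fin i,
        (a = .inl (u, c1) ∧ ExtraOf c a') ∨ (a' = .inl (u, c1) ∧ ExtraOf c a)) := by
  have hmem : ∀ k, b.orderEmbOfFin hb k ∈ b := fun k => b.orderEmbOfFin_mem hb k
  have hinj : Function.Injective (b.orderEmbOfFin hb) := (b.orderEmbOfFin hb).injective
  rw [pieceBlock]
  split_ifs with hcx hcy
  · -- weighted by p
    simp only [map_adj, K5, comap_adj, top_adj]
    constructor
    · rintro ⟨(⟨k, c1⟩ | α), (⟨k', c2⟩ | α'), hne, rfl, rfl⟩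
      · refine .inl ⟨_, hmem k, _, hmem k', fun h => hne ?_, c1, c2, rfl, rfl⟩
        have : k = k' := hinj h
        subst this; rfl
      · exact .inr ⟨_, hmem k, c1, .inl ⟨rfl, .inl ⟨hcx, α', rfl⟩⟩⟩
      · exact .inr ⟨_, hmem k', c2, .inr ⟨rfl, .inl ⟨hcx, α, rfl⟩⟩⟩
      · simp [part5] at hne
    · rintro (⟨u, hu, v, hv, huv, c1, c2, rfl, rfl⟩ | ⟨u, hu, c1, H⟩)
      · obtain ⟨k, rfl⟩ := exists_orderEmb hb hu
        obtain ⟨k', rfl⟩ := exists_orderEmb hb hv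
        refine ⟨.inl (k, c1), .inl (k', c2), ?_, rfl, rfl⟩
        simp only [part5, Sum.elim_inl, ne_eq, Fin.castSucc_inj]
        exact fun h => huv (by rw [h])
      · obtain ⟨k, rfl⟩ := exists_orderEmb hb hu
        rcases H with ⟨rfl, (⟨h, α, rfl⟩ | ⟨h1, h2, β, rfl⟩)⟩ | ⟨rfl, (⟨h, α, rfl⟩ | ⟨h1, h2, β, rfl⟩)⟩
        · exact ⟨.inl (k, c1), .inr α, by simp [part5, Fin.ext_iff]; omega, rfl, rfl⟩
        · omega
        · exact ⟨.inr α, .inl (k, c1), by simp [part5, Fin.ext_iff]; omega, rfl, rfl⟩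
        · omega
  · -- weighted by q
    simp only [map_adj, K5, comap_adj, top_adj]
    constructor
    · rintro ⟨(⟨k, c1⟩ | β), (⟨k', c2⟩ | β'), hne, rfl, rfl⟩
      · refine .inl ⟨_, hmem k, _, hmem k', fun h => hne ?_, c1, c2, rfl, rfl⟩
        have : k = k' := hinj h
        subst this; rfl
      · exact .inr ⟨_, hmem k, c1, .inl ⟨rfl, .inr ⟨by omega, by omega, β', rfl⟩⟩⟩
      · exact .inr ⟨_, hmem k', c2, .inr ⟨rfl, .inr ⟨by omega, by omega, β, rfl⟩⟩⟩
      · simp [part5] at hne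
    · rintro (⟨u, hu, v, hv, huv, c1, c2, rfl, rfl⟩ | ⟨u, hu, c1, H⟩)
      · obtain ⟨k, rfl⟩ := exists_orderEmb hb hu
        obtain ⟨k', rfl⟩ := exists_orderEmb hb hv
        refine ⟨.inl (k, c1), .inl (k', c2), ?_, rfl, rfl⟩
        simp only [part5, Sum.elim_inl, ne_eq, Fin.castSucc_inj]
        exact fun h => huv (by rw [h])
      · obtain ⟨k, rfl⟩ := exists_orderEmb hb hu
        rcases H with ⟨rfl, (⟨h, α, rfl⟩ | ⟨h1, h2, β, rfl⟩)⟩ | ⟨rfl, (⟨h, α, rfl⟩ | ⟨h1, h2, β, rfl⟩)⟩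
        · omega
        · exact ⟨.inl (k, c1), .inr β, by simp [part5, Fin.ext_iff]; omega, rfl, rfl⟩
        · omega
        · exact ⟨.inr β, .inl (k, c1), by simp [part5, Fin.ext_iff]; omega, rfl, rfl⟩
  · -- unweighted
    simp only [map_adj, K4p, comap_adj, top_adj]
    constructor
    · rintro ⟨⟨k, c1⟩, ⟨k', c2⟩, hne, rfl, rfl⟩
      refine .inl ⟨_, hmem k, _, hmem k', fun h => hne ?_, c1, c2, rfl, rfl⟩
      have : k = k' := hinj h
      subst this; rfl
    · rintro (⟨u, hu, v, hv, huv, c1, c2, rfl, rfl⟩ | ⟨u, hu, c1, H⟩)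
      · obtain ⟨k, rfl⟩ := exists_orderEmb hb hu
        obtain ⟨k', rfl⟩ := exists_orderEmb hb hv
        refine ⟨(k, c1), (k', c2), ?_, rfl, rfl⟩
        exact fun h => huv (by rw [show k = k' from h])
      · rcases H with ⟨rfl, (⟨h, α, rfl⟩ | ⟨h1, h2, β, rfl⟩)⟩ | ⟨rfl, (⟨h, α, rfl⟩ | ⟨h1, h2, β, rfl⟩)⟩ <;> omega

end AdjChar

/-! ### the pieces decompose into `G` -/

section PieceDecomp

variable {W : Type*} {G : SimpleGraph W} {t i x p y q e : ℕ}

lemma hasDecomp_pieceGroup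
    (h1 : HasDecomp (⊤ : SimpleGraph (Fin (4 * i + e))) G)
    (g : Finset (Fin (12 * t + 4))) (hg : g.card = 4) :
    HasDecomp (pieceGroup i x p y q e g hg) G := by
  refine hasDecomp_map _ (hasDecomp_of_iso (Iso.completeGraph ?_) h1)
  exact (Equiv.sumCongr finProdFinEquiv (Equiv.refl (Fin e))).trans finSumFinEquiv

lemma hasDecomp_pieceExtra
    (h2 : HasDecomp (⊤ : SimpleGraph (Fin (x * p + y * q + e))) G) :
    HasDecomp (pieceExtra i x p y q e : SimpleGraph (VV t i x p y q e)) G := by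
  refine hasDecomp_map _ (hasDecomp_of_iso (Iso.completeGraph ?_) h2)
  exact (Equiv.sumCongr ((Equiv.sumCongr finProdFinEquiv finProdFinEquiv).trans finSumFinEquiv)
    (Equiv.refl (Fin e))).trans finSumFinEquiv

lemma hasDecomp_pieceBlock
    (h3 : HasDecomp (completeMultipartiteGraph (fun _ : Fin 4 => Fin i)) G)
    (h4 : HasDecomp (completeMultipartiteGraph ![Fin i, Fin i, Fin i, Fin i, Fin p]) G)
    (h5 : HasDecomp (completeMultipartiteGraph ![Fin i, Fin i, Fin i, Fin i, Fin q]) G)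
    (c : Fin (4 * t)) (b : Finset (Fin (12 * t + 4))) (hb : b.card = 4) :
    HasDecomp (pieceBlock i p q e c b hb : SimpleGraph (VV t i x p y q e)) G := by
  rw [pieceBlock]
  split_ifs with hcx hcy
  · exact hasDecomp_map _ (hasDecomp_of_iso isoM5 h4)
  · exact hasDecomp_map _ (hasDecomp_of_iso isoM5 h5)
  · exact hasDecomp_map _ (hasDecomp_of_iso isoK4p h3)

end PieceDecomp

/-! ### the family of pieces -/

section Classify

variable {t i x p y q e : ℕ}

/-- index type for the family of pieces -/
def Idx (D : Resolvable4GDD t) : Type :=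
  {g // g ∈ D.groups} ⊕ ((Σ c : Fin (4 * t), {b // b ∈ D.classes c}) ⊕ Unit)

/-- the family of pieces -/
def F (i x p y q e : ℕ) (D : Resolvable4GDD t) : Idx D → SimpleGraph (VV t i x p y q e)
  | .inl ⟨g, hg⟩ => pieceGroup i x p y q e g (D.group_size g hg)
  | .inr (.inl ⟨c, ⟨b, hb⟩⟩) => pieceBlock i p q e c b (D.block_size c b hb)
  | .inr (.inr _) => pieceExtra i x p y q e

variable (D : Resolvable4GDD t)

@[simp] lemma F_group {g : Finset (Fin (12 * t + 4))} {hg : g ∈ D.groups} :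
    F i x p y q e D (.inl ⟨g, hg⟩) = pieceGroup i x p y q e g (D.group_size g hg) := rfl

@[simp] lemma F_block {c : Fin (4 * t)} {b : Finset (Fin (12 * t + 4))} {hb : b ∈ D.classes c} :
    F i x p y q e D (.inr (.inl ⟨c, ⟨b, hb⟩⟩)) =
      pieceBlock i p q e c b (D.block_size c b hb) := rfl

@[simp] lemma F_extra {k : Unit} :
    F i x p y q e D (.inr (.inr k)) = pieceExtra i x p y q e := rfl

lemma classify_main (u v : Fin (12 * t + 4)) (c1 c2 : Fin i)
    (hne : (.inl (u, c1) : VV t i x p y q e) ≠ .inl (v, c2)) :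
    ∃! k : Idx D, (F i x p y q e D k).Adj (.inl (u, c1)) (.inl (v, c2)) := by
  by_cases huv : u = v
  · subst huv
    obtain ⟨g, ⟨hg, hug⟩, hgu⟩ := D.groups_partition u
    refine ⟨.inl ⟨g, hg⟩, ?_, ?_⟩
    · show (pieceGroup i x p y q e _ _).Adj _ _
      rw [pieceGroup_adj]
      exact ⟨hne, .inl ⟨u, hug, c1, rfl⟩, .inl ⟨u, hug, c2, rfl⟩⟩
    · rintro (⟨g', hg'⟩ | (⟨c', b', hb'⟩ | k')) hadj
      · rw [F_group, pieceGroup_adj] at hadj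
        obtain ⟨-, (⟨u', hu', ci, h⟩ | ⟨z, h⟩), -⟩ := hadj
        · simp only [Sum.inl.injEq, Prod.mk.injEq] at h
          obtain ⟨h, -⟩ := h
          subst h
          have : g' = g := hgu g' ⟨hg', hu'⟩
          subst this
          rfl
        · simp at h
      · exfalso
        rw [F_block, pieceBlock_adj] at hadj
        rcases hadj with ⟨u1, hu1, v1, hv1, hne1, d1, d2, h1, h2⟩ |
          ⟨u1, -, d1, ⟨-, hex⟩ | ⟨-, hex⟩⟩
        · simp only [Sum.inl.injEq, Prod.mk.injEq] at h1 h2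
          exact hne1 (by rw [← h1.1, ← h2.1])
        · rcases hex with ⟨hx1, α, h⟩ | ⟨hx1, hx2, β, h⟩ <;> simp at h
        · rcases hex with ⟨hx1, α, h⟩ | ⟨hx1, hx2, β, h⟩ <;> simp at h
      · rw [F_extra, pieceExtra_adj] at hadj
        obtain ⟨-, ⟨z, h⟩, -⟩ := hadj
        simp at h
  · by_cases hsame : ∃ g ∈ D.groups, u ∈ g ∧ v ∈ g
    · obtain ⟨g, hg, hug, hvg⟩ := hsame
      obtain ⟨g0, -, hgu⟩ := D.groups_partition u
      refine ⟨.inl ⟨g, hg⟩, ?_, ?_⟩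
      · show (pieceGroup i x p y q e _ _).Adj _ _
        rw [pieceGroup_adj]
        exact ⟨hne, .inl ⟨u, hug, c1, rfl⟩, .inl ⟨v, hvg, c2, rfl⟩⟩
      · rintro (⟨g', hg'⟩ | (⟨c', b', hb'⟩ | k')) hadj
        · rw [F_group, pieceGroup_adj] at hadj
          obtain ⟨-, (⟨u', hu', ci, h⟩ | ⟨z, h⟩), -⟩ := hadj
          · simp only [Sum.inl.injEq, Prod.mk.injEq] at h
            obtain ⟨h, -⟩ := h
            subst h
            have h1 : g' = g0 := hgu g' ⟨hg', hu'⟩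
            have h2 : g = g0 := hgu g ⟨hg, hug⟩
            subst h1; subst h2
            rfl
          · simp at h
        · exfalso
          rw [F_block, pieceBlock_adj] at hadj
          rcases hadj with ⟨u1, hu1, v1, hv1, hne1, d1, d2, h1, h2⟩ |
            ⟨u1, -, d1, ⟨-, hex⟩ | ⟨-, hex⟩⟩
          · simp only [Sum.inl.injEq, Prod.mk.injEq] at h1 h2
            obtain ⟨rfl, -⟩ := h1
            obtain ⟨rfl, -⟩ := h2
            exact D.within_never u v huv ⟨g, hg, hug, hvg⟩ c' b' hb' ⟨hu1, hv1⟩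
          · rcases hex with ⟨hx1, α, h⟩ | ⟨hx1, hx2, β, h⟩ <;> simp at h
          · rcases hex with ⟨hx1, α, h⟩ | ⟨hx1, hx2, β, h⟩ <;> simp at h
        · rw [F_extra, pieceExtra_adj] at hadj
          obtain ⟨-, ⟨z, h⟩, -⟩ := hadj
          simp at h
    · push_neg at hsame
      obtain ⟨⟨c, b⟩, ⟨hbmem, hub, hvb⟩, hcb⟩ :=
        D.cross_once u v huv (fun g hg h => hsame g hg h.1 h.2)
      refine ⟨.inr (.inl ⟨c, ⟨b, hbmem⟩⟩), ?_, ?_⟩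
      · show (pieceBlock i p q e _ _ _).Adj _ _
        rw [pieceBlock_adj]
        exact .inl ⟨u, hub, v, hvb, huv, c1, c2, rfl, rfl⟩
      · rintro (⟨g', hg'⟩ | (⟨c', b', hb'⟩ | k')) hadj
        · exfalso
          rw [F_group, pieceGroup_adj] at hadj
          obtain ⟨-, (⟨u', hu', ci, h⟩ | ⟨z, h⟩), (⟨v', hv', ci', h'⟩ | ⟨z', h'⟩)⟩ := hadj
          · simp only [Sum.inl.injEq, Prod.mk.injEq] at h h'
            obtain ⟨h, -⟩ := h
            obtain ⟨h', -⟩ := h'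
            subst h; subst h'
            exact hsame g' hg' hu' hv'
          · simp at h'
          · simp at h
          · simp at h
        · rw [F_block, pieceBlock_adj] at hadj
          rcases hadj with ⟨u1, hu1, v1, hv1, hne1, d1, d2, h1, h2⟩ |
            ⟨u1, -, d1, ⟨-, hex⟩ | ⟨-, hex⟩⟩
          · simp only [Sum.inl.injEq, Prod.mk.injEq] at h1 h2
            obtain ⟨rfl, -⟩ := h1
            obtain ⟨rfl, -⟩ := h2
            have := hcb (c', b') ⟨hb', hu1, hv1⟩
            simp only [Prod.mk.injEq] at this
            obtain ⟨rfl, rfl⟩ := this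
            rfl
          · exfalso
            rcases hex with ⟨hx1, α, h⟩ | ⟨hx1, hx2, β, h⟩ <;> simp at h
          · exfalso
            rcases hex with ⟨hx1, α, h⟩ | ⟨hx1, hx2, β, h⟩ <;> simp at h
        · rw [F_extra, pieceExtra_adj] at hadj
          obtain ⟨-, ⟨z, h⟩, -⟩ := hadj
          simp at h

lemma classify_mainX (hxle : x + y ≤ 4 * t) (u : Fin (12 * t + 4)) (c1 : Fin i)
    (j : Fin x) (α : Fin p) :
    ∃! k : Idx D, (F i x p y q e D k).Adj
      (.inl (u, c1) : VV t i x p y q e) (.inr (.inl (.inl (j, α)))) := by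
  have hjlt : (j : ℕ) < 4 * t := by omega
  set cdef : Fin (4 * t) := ⟨(j : ℕ), hjlt⟩ with hcdef
  obtain ⟨b, ⟨hbmem, hub⟩, hbu⟩ := D.class_partition cdef u
  refine ⟨.inr (.inl ⟨cdef, ⟨b, hbmem⟩⟩), ?_, ?_⟩
  · show (pieceBlock i p q e _ _ _).Adj _ _
    rw [pieceBlock_adj]
    exact .inr ⟨u, hub, c1, .inl ⟨rfl, .inl ⟨j.isLt, α, rfl⟩⟩⟩
  · rintro (⟨g', hg'⟩ | (⟨c', b', hb'⟩ | k')) hadj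
    · exfalso
      rw [F_group, pieceGroup_adj] at hadj
      obtain ⟨-, -, (⟨u', hu', ci, h⟩ | ⟨z, h⟩)⟩ := hadj
      · simp at h
      · simp at h
    · rw [F_block, pieceBlock_adj] at hadj
      rcases hadj with ⟨u1, hu1, v1, hv1, hne1, d1, d2, h1, h2⟩ |
        ⟨u1, hu1, d1, ⟨heq, hex⟩ | ⟨heq, hex⟩⟩
      · simp at h2
      · simp only [Sum.inl.injEq, Prod.mk.injEq] at heq
        obtain ⟨rfl, -⟩ := heq
        rcases hex with ⟨h, α', hx⟩ | ⟨h1x, h2x, β, hx⟩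
        · simp only [Sum.inr.injEq, Sum.inl.injEq, Prod.mk.injEq, Fin.mk.injEq] at hx
          obtain ⟨hj, -⟩ := hx
          have hjv := congrArg Fin.val hj
          have : c' = cdef := Fin.ext (by show (c' : ℕ) = (j : ℕ); simp at hjv; omega)
          subst this
          have : b' = b := hbu b' ⟨hb', hu1⟩
          subst this
          rfl
        · simp at hx
      · simp at heq
    · exfalso
      rw [F_extra, pieceExtra_adj] at hadj
      obtain ⟨-, ⟨z, h⟩, -⟩ := hadj
      simp at h

lemma classify_mainY (hxle : x + y ≤ 4 * t) (u : Fin (12 * t + 4)) (c1 : Fin i)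
    (j : Fin y) (β : Fin q) :
    ∃! k : Idx D, (F i x p y q e D k).Adj
      (.inl (u, c1) : VV t i x p y q e) (.inr (.inl (.inr (j, β)))) := by
  have hjlt : x + (j : ℕ) < 4 * t := by omega
  set cdef : Fin (4 * t) := ⟨x + (j : ℕ), hjlt⟩ with hcdef
  obtain ⟨b, ⟨hbmem, hub⟩, hbu⟩ := D.class_partition cdef u
  refine ⟨.inr (.inl ⟨cdef, ⟨b, hbmem⟩⟩), ?_, ?_⟩
  · show (pieceBlock i p q e _ _ _).Adj _ _
    rw [pieceBlock_adj]
    refine .inr ⟨u, hub, c1, .inl ⟨rfl, .inr ⟨?_, ?_, β, ?_⟩⟩⟩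
    · exact Nat.le_add_right x (j : ℕ)
    · show x + (j : ℕ) - x < y
      simpa using j.isLt
    · simp only [Sum.inr.injEq, Sum.inl.injEq, Prod.mk.injEq]
      exact ⟨Fin.ext (by show (j : ℕ) = x + (j : ℕ) - x; omega), trivial⟩
  · rintro (⟨g', hg'⟩ | (⟨c', b', hb'⟩ | k')) hadj
    · exfalso
      rw [F_group, pieceGroup_adj] at hadj
      obtain ⟨-, -, (⟨u', hu', ci, h⟩ | ⟨z, h⟩)⟩ := hadj
      · simp at h
      · simp at h
    · rw [F_block, pieceBlock_adj] at hadj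
      rcases hadj with ⟨u1, hu1, v1, hv1, hne1, d1, d2, h1, h2⟩ |
        ⟨u1, hu1, d1, ⟨heq, hex⟩ | ⟨heq, hex⟩⟩
      · simp at h2
      · simp only [Sum.inl.injEq, Prod.mk.injEq] at heq
        obtain ⟨rfl, -⟩ := heq
        rcases hex with ⟨h, α', hx⟩ | ⟨h1x, h2x, β', hx⟩
        · simp at hx
        · simp only [Sum.inr.injEq, Sum.inl.injEq, Prod.mk.injEq, Fin.mk.injEq] at hx
          obtain ⟨hj, -⟩ := hx
          have hjv := congrArg Fin.val hj
          have : c' = cdef := Fin.ext (by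
            show (c' : ℕ) = x + (j : ℕ); simp at hjv; omega)
          subst this
          have : b' = b := hbu b' ⟨hb', hu1⟩
          subst this
          rfl
      · simp at heq
    · exfalso
      rw [F_extra, pieceExtra_adj] at hadj
      obtain ⟨-, ⟨z, h⟩, -⟩ := hadj
      simp at h

lemma classify_mainZ (u : Fin (12 * t + 4)) (c1 : Fin i) (z : Fin e) :
    ∃! k : Idx D, (F i x p y q e D k).Adj
      (.inl (u, c1) : VV t i x p y q e) (.inr (.inr z)) := by
  obtain ⟨g, ⟨hg, hug⟩, hgu⟩ := D.groups_partition u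
  refine ⟨.inl ⟨g, hg⟩, ?_, ?_⟩
  · show (pieceGroup i x p y q e _ _).Adj _ _
    rw [pieceGroup_adj]
    exact ⟨by simp, .inl ⟨u, hug, c1, rfl⟩, .inr ⟨z, rfl⟩⟩
  · rintro (⟨g', hg'⟩ | (⟨c', b', hb'⟩ | k')) hadj
    · rw [F_group, pieceGroup_adj] at hadj
      obtain ⟨-, (⟨u', hu', ci, h⟩ | ⟨z0, h⟩), -⟩ := hadj
      · simp only [Sum.inl.injEq, Prod.mk.injEq] at h
        obtain ⟨h, -⟩ := h
        subst h
        have : g' = g := hgu g' ⟨hg', hu'⟩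
        subst this
        rfl
      · simp at h
    · exfalso
      rw [F_block, pieceBlock_adj] at hadj
      rcases hadj with ⟨u1, hu1, v1, hv1, hne1, d1, d2, h1, h2⟩ |
        ⟨u1, hu1, d1, ⟨heq, hex⟩ | ⟨heq, hex⟩⟩
      · simp at h2
      · rcases hex with ⟨hx1, α', hx⟩ | ⟨hx1, hx2, β', hx⟩ <;> simp at hx
      · simp at heq
    · exfalso
      rw [F_extra, pieceExtra_adj] at hadj
      obtain ⟨-, ⟨z0, h⟩, -⟩ := hadj
      simp at h

lemma classify_extra (he1 : e ≤ 1) (z z' : (Fin x × Fin p ⊕ Fin y × Fin q) ⊕ Fin e)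
    (hne : (.inr z : VV t i x p y q e) ≠ .inr z') :
    ∃! k : Idx D, (F i x p y q e D k).Adj (.inr z) (.inr z') := by
  refine ⟨.inr (.inr ()), ?_, ?_⟩
  · show (pieceExtra i x p y q e).Adj _ _
    rw [pieceExtra_adj]
    exact ⟨hne, ⟨z, rfl⟩, ⟨z', rfl⟩⟩
  · rintro (⟨g, hg⟩ | (⟨c, b, hb⟩ | u)) hadj
    · rw [show F i x p y q e D (.inl ⟨g, hg⟩) = pieceGroup i x p y q e g (D.group_size g hg)
        from rfl, pieceGroup_adj] at hadj
      obtain ⟨-, (⟨u, -, ci, h⟩ | ⟨z0, h⟩), (⟨u', -, ci', h'⟩ | ⟨z0', h'⟩)⟩ := hadj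
      · simp at h
      · simp at h
      · simp at h'
      · exfalso
        simp only [Sum.inr.injEq] at h h'
        subst h; subst h'
        refine hne ?_
        have : z0 = z0' := by
          have := z0.isLt; have := z0'.isLt
          exact Fin.ext (by omega)
        rw [this]
    · rw [show F i x p y q e D (.inr (.inl ⟨c, ⟨b, hb⟩⟩)) =
        pieceBlock i p q e c b (D.block_size c b hb) from rfl, pieceBlock_adj] at hadj
      rcases hadj with ⟨u, -, v, -, -, c1, c2, h, -⟩ | ⟨u, -, c1, ⟨h, -⟩ | ⟨h, -⟩⟩ <;> simp at h
    · rfl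

lemma classify (hxle : x + y ≤ 4 * t) (he1 : e ≤ 1) (a a' : VV t i x p y q e)
    (hne : a ≠ a') : ∃! k : Idx D, (F i x p y q e D k).Adj a a' := by
  have hsymm : ∀ (b b' : VV t i x p y q e),
      (∃! k : Idx D, (F i x p y q e D k).Adj b b') →
      ∃! k : Idx D, (F i x p y q e D k).Adj b' b := by
    rintro b b' ⟨k, hk, hu⟩
    exact ⟨k, hk.symm, fun k' h => hu k' h.symm⟩
  rcases a with ⟨u, c1⟩ | za
  · rcases a' with ⟨v, c2⟩ | za'
    · exact classify_main D u v c1 c2 hne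
    · rcases za' with (⟨j, α⟩ | ⟨j, β⟩) | z
      · exact classify_mainX D hxle u c1 j α
      · exact classify_mainY D hxle u c1 j β
      · exact classify_mainZ D u c1 z
  · rcases a' with ⟨v, c2⟩ | za'
    · rcases za with (⟨j, α⟩ | ⟨j, β⟩) | z
      · exact hsymm _ _ (classify_mainX D hxle v c2 j α)
      · exact hsymm _ _ (classify_mainY D hxle v c2 j β)
      · exact hsymm _ _ (classify_mainZ D v c2 z)
    · exact classify_extra D he1 za za' hne

include D in
lemma hasDecomp_VV {W : Type*} {G : SimpleGraph W} (hxle : x + y ≤ 4 * t) (he1 : e ≤ 1)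
    (h1 : HasDecomp (⊤ : SimpleGraph (Fin (4 * i + e))) G)
    (h2 : HasDecomp (⊤ : SimpleGraph (Fin (x * p + y * q + e))) G)
    (h3 : HasDecomp (completeMultipartiteGraph (fun _ : Fin 4 => Fin i)) G)
    (h4 : HasDecomp (completeMultipartiteGraph ![Fin i, Fin i, Fin i, Fin i, Fin p]) G)
    (h5 : HasDecomp (completeMultipartiteGraph ![Fin i, Fin i, Fin i, Fin i, Fin q]) G) :
    HasDecomp (⊤ : SimpleGraph (VV t i x p y q e)) G := by
  apply hasDecomp_glue (F i x p y q e D) (fun k => le_top) ?_ ?_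
  · rintro (⟨g, hg⟩ | (⟨c, b, hb⟩ | k))
    · exact hasDecomp_pieceGroup h1 g _
    · exact hasDecomp_pieceBlock h3 h4 h5 c b _
    · exact hasDecomp_pieceExtra h2
  · intro ed hed
    induction ed using Sym2.inductionOn with
    | hf a a' =>
      rw [SimpleGraph.mem_edgeSet, top_adj] at hed
      simpa only [SimpleGraph.mem_edgeSet] using classify D hxle he1 a a' hed

end Classify

end FGF

/-- Wilson's construction (Forbes–Griggs–Forbes): if `K_{4i+e}`, `K_{xp+yq+e}`,
`K_{i,i,i,i}`, `K_{i,i,i,i,p}` and `K_{i,i,i,i,q}` all decompose into `G`, and the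
resolvable 4-GDD structure underlying the construction exists, then there is a
`G`-design of order `12it + 4i + xp + yq + e`. -/
theorem stmt_11 {W : Type*} (G : SimpleGraph W)
    (i t p q : ℕ) (hi : 0 < i) (ht : 0 < t) (hp : 0 < p) (hq : 0 < q)
    (w x y e : ℕ) (hxy : x + y = w) (hw : w ≤ 4 * t) (he : e = 0 ∨ e = 1)
    (h1 : HasDecomp (⊤ : SimpleGraph (Fin (4 * i + e))) G)
    (h2 : HasDecomp (⊤ : SimpleGraph (Fin (x * p + y * q + e))) G)
    (h3 : HasDecomp (completeMultipartiteGraph (fun _ : Fin 4 => Fin i)) G)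
    (h4 : HasDecomp (completeMultipartiteGraph ![Fin i, Fin i, Fin i, Fin i, Fin p]) G)
    (h5 : HasDecomp (completeMultipartiteGraph ![Fin i, Fin i, Fin i, Fin i, Fin q]) G)
    (hgdd : Nonempty (Resolvable4GDD t)) :
    HasDecomp (⊤ : SimpleGraph (Fin (12 * i * t + 4 * i + x * p + y * q + e))) G := by
  obtain ⟨D⟩ := hgdd
  have he1 : e ≤ 1 := by omega
  have hxle : x + y ≤ 4 * t := by omega
  have hV := FGF.hasDecomp_VV D hxle he1 h1 h2 h3 h4 h5
  refine hasDecomp_of_iso (SimpleGraph.Iso.completeGraph ?_) hV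
  refine Fintype.equivOfCardEq ?_
  simp only [Fintype.card_sum, Fintype.card_prod, Fintype.card_fin]
  ring
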